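/- arXiv:1102.5266 — 5 statements merged into one kernel-verified Lean document; each statement's English description precedes it below -/
import Mathlib

section
/- Let z_1, ..., z_d be positive real numbers and y > 0 a real number with z_i > y for all i. Then the harmonic mean satisfies HM(z_1 - y, ..., z_d - y) ≥ HM(z_1, ..., z_d) - d·y, where HM(w_1,...,w_d) = d / (∑_i 1/w_i). -/
theorem harmonic_mean_shift (d : ℕ) (z : Fin d → ℝ) (y : ℝ)
    (hz : ∀ i, 0 < z i) (hy : 0 < y) (hzy : ∀ i, y < z i) :
    (d : ℝ) / (∑ i, 1 / (z i - y)) ≥ (d : ℝ) / (∑ i, 1 / z i) - d * y := by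
  rcases Nat.eq_zero_or_pos d with hd | hd
  · subst hd; simp
  have hzi : ∀ i, 0 < z i - y := fun i => sub_pos.2 (hzy i)
  have hne : (Finset.univ : Finset (Fin d)).Nonempty := by
    simpa [Finset.univ_nonempty_iff] using Fin.pos_iff_nonempty.mp hd
  set S := ∑ i, 1 / z i with hS
  set T := ∑ i, 1 / (z i - y) with hT
  have hSpos : 0 < S := Finset.sum_pos (fun i _ => one_div_pos.2 (hz i)) hne
  have hTpos : 0 < T := Finset.sum_pos (fun i _ => one_div_pos.2 (hzi i)) hne
  have h1 : T - S = y * ∑ i, (1 / z i) * (1 / (z i - y)) := by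
    rw [hT, hS, ← Finset.sum_sub_distrib, Finset.mul_sum]
    refine Finset.sum_congr rfl fun i _ => ?_
    have h1 := (hz i).ne'
    have h2 := (hzi i).ne'
    field_simp
    ring
  have h2 : ∑ i, (1 / z i) * (1 / (z i - y)) ≤ S * T := by
    rw [hS, Finset.sum_mul]
    refine Finset.sum_le_sum fun i _ => ?_
    have hb : 1 / (z i - y) ≤ T := by
      rw [hT]
      exact Finset.single_le_sum (fun j _ => (one_div_pos.2 (hzi j)).le) (Finset.mem_univ i)
    have ha : 0 ≤ 1 / z i := (one_div_pos.2 (hz i)).le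
    exact mul_le_mul_of_nonneg_left hb ha
  have key : T - S ≤ y * (S * T) := by
    rw [h1]
    exact mul_le_mul_of_nonneg_left h2 hy.le
  have h3 : 1 / S - y ≤ 1 / T := by
    have h : (1 / S - y) * (S * T) ≤ (1 / T) * (S * T) := by
      have e1 : (1 / S - y) * (S * T) = T - y * (S * T) := by
        field_simp
      have e2 : (1 / T) * (S * T) = S := by field_simp
      rw [e1, e2]; linarith
    exact le_of_mul_le_mul_right h (mul_pos hSpos hTpos)
  have hd' : (0 : ℝ) ≤ d := Nat.cast_nonneg d
  have h4 := mul_le_mul_of_nonneg_left h3 hd'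
  rw [ge_iff_le, div_eq_mul_one_div (d : ℝ) S, div_eq_mul_one_div (d : ℝ) T]
  nlinarith [h4]
end

section
/- Let f be a polynomial of degree d over ℝ, J = [c,e] an interval with midpoint m = (c+e)/2 and width w = e - c, such that f(m) ≠ 0. If ∑_{j=1}^d 1/|m - α_j| ≤ 1/w, where α_1,...,α_d are the complex roots of f counted with multiplicity, then |f(m)| > ∑_{i=1}^d (|f^{(i)}(m)|/i!)·(w/2)^i. -/
open Polynomial

theorem eval_terminal_C0 (d : ℕ) (f : Polynomial ℝ) (hdeg : f.natDegree = d)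
    (α : Fin d → ℂ)
    (hroots : f.map (algebraMap ℝ ℂ) =
      C ((algebraMap ℝ ℂ) f.leadingCoeff) * ∏ j, (X - C (α j)))
    (c e : ℝ) (hce : c < e) (m w : ℝ) (hm : m = (c + e) / 2) (hw : w = e - c)
    (hfm : f.eval m ≠ 0)
    (hSigma : (∑ j, 1 / ‖(m : ℂ) - α j‖) ≤ 1 / w) :
    |f.eval m| >
      ∑ i ∈ Finset.Icc 1 d,
        |(Polynomial.derivative^[i] f).eval m| / (Nat.factorial i) * (w / 2) ^ i := by
  have hw0 : 0 < w := by simp [hw]; linarith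
  set y : ℝ := w / 2 with hy
  have hy0 : 0 < y := by positivity
  set A : ℂ := (m : ℂ) with hA
  set r : Fin d → ℝ := fun j => ‖A - α j‖ with hr
  set lc : ℝ := f.leadingCoeff with hlc
  -- evaluate F at A
  have hevalF : (f.map (algebraMap ℝ ℂ)).eval A = ((f.eval m : ℝ) : ℂ) := by
    rw [eval_map]
    have : A = (algebraMap ℝ ℂ) m := rfl
    rw [this, eval₂_at_apply]
    rfl
  have hprodeq : ((f.eval m : ℝ) : ℂ) = ((lc : ℝ) : ℂ) * ∏ j, (A - α j) := by
    rw [← hevalF, hroots]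
    simp [eval_prod]
  have hfactor : ∀ j, A - α j ≠ 0 := by
    intro j hj
    apply hfm
    have := hprodeq
    rw [Finset.prod_eq_zero (Finset.mem_univ j) hj, mul_zero] at this
    exact_mod_cast this
  have hr0 : ∀ j, 0 < r j := fun j => (norm_pos_iff.mpr (hfactor j))
  have habs : |f.eval m| = |lc| * ∏ j, r j := by
    have := congrArg (fun z : ℂ => ‖z‖) hprodeq
    simpa [norm_mul, norm_prod, Complex.norm_real, Real.norm_eq_abs, hr] using this
  -- Taylor coefficients
  set P : Polynomial ℂ := ∏ j, (X + C (A - α j)) with hP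
  have htaylor : (taylor m f).map (algebraMap ℝ ℂ) = C ((lc : ℝ) : ℂ) * P := by
    rw [taylor_apply, map_comp, hroots]
    simp only [Polynomial.map_add, Polynomial.map_X, Polynomial.map_C, mul_comp, C_comp,
      prod_comp, sub_comp, X_comp]
    have hAm : ((algebraMap ℝ ℂ) m) = A := rfl
    rw [hP, hAm]
    congr 1
    apply Finset.prod_congr rfl
    intro j _
    rw [C_sub]
    ring
  have hcoeff : ∀ i, (((taylor m f).coeff i : ℝ) : ℂ) = ((lc : ℝ) : ℂ) * P.coeff i := by
    intro i
    have := congrArg (fun p => Polynomial.coeff p i) htaylor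
    simpa [coeff_map, coeff_C_mul, -Polynomial.map_taylor] using this
  have hderiv : ∀ i, |(Polynomial.derivative^[i] f).eval m| / (Nat.factorial i) =
      |lc| * ‖P.coeff i‖ := by
    intro i
    have h1 : (Polynomial.derivative^[i] f) = (i.factorial : ℕ) • Polynomial.hasseDeriv i f := by
      rw [← Polynomial.factorial_smul_hasseDeriv]; rfl
    have h2 : (Polynomial.derivative^[i] f).eval m = (i.factorial : ℝ) * (taylor m f).coeff i := by
      rw [h1, taylor_coeff]
      simp [mul_comm]
    have h3 : ‖((lc : ℝ) : ℂ) * P.coeff i‖ = |lc| * ‖P.coeff i‖ := by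
      simp [norm_mul, Complex.norm_real]
    rw [h2, ← h3, ← hcoeff i]
    rw [Complex.norm_real, Real.norm_eq_abs, abs_mul, abs_of_nonneg (by positivity : (0:ℝ) ≤ (i.factorial : ℝ))]
    field_simp
  -- real comparison polynomial
  set Q : Polynomial ℝ := ∏ j, (X + C (r j)) with hQ
  have hcard : (Finset.univ : Finset (Fin d)).card = d := by simp
  have hcoeffP : ∀ i, i ≤ d → ‖P.coeff i‖ ≤ Q.coeff i := by
    intro i hi
    rw [hP, hQ, Finset.prod_X_add_C_coeff _ _ (by simpa using hi),
      Finset.prod_X_add_C_coeff _ _ (by simpa using hi)]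
    refine le_trans (norm_sum_le _ _) ?_
    apply Finset.sum_le_sum
    intro t _
    rw [norm_prod]
  have hQnonneg : ∀ i, 0 ≤ Q.coeff i := by
    intro i
    rcases le_or_gt i d with hi | hi
    · refine le_trans ?_ (hcoeffP i hi); positivity
    · have : Q.natDegree < i := by
        refine lt_of_le_of_lt ?_ hi
        refine le_trans (Polynomial.natDegree_prod_le _ _) ?_
        simp [Polynomial.natDegree_X_add_C]
      rw [Polynomial.coeff_eq_zero_of_natDegree_lt this]
  have hQdeg : Q.natDegree < d + 1 := by
    refine Nat.lt_succ_of_le ?_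
    refine le_trans (Polynomial.natDegree_prod_le _ _) ?_
    simp [Polynomial.natDegree_X_add_C]
  -- main chain
  have step1 : ∑ i ∈ Finset.Icc 1 d,
      |(Polynomial.derivative^[i] f).eval m| / (Nat.factorial i) * y ^ i
      ≤ |lc| * ∑ i ∈ Finset.Icc 1 d, Q.coeff i * y ^ i := by
    rw [Finset.mul_sum]
    apply Finset.sum_le_sum
    intro i hi
    rw [hderiv i, mul_assoc]
    have hi' : i ≤ d := (Finset.mem_Icc.mp hi).2
    have := hcoeffP i hi'
    have hlc0 : 0 ≤ |lc| := abs_nonneg _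
    exact mul_le_mul_of_nonneg_left (mul_le_mul_of_nonneg_right this (pow_nonneg (le_of_lt hy0) i)) hlc0
  have hIcc : Finset.Icc 1 d = (Finset.range (d + 1)).erase 0 := by
    ext i; simp [Finset.mem_Icc, Finset.mem_erase, Finset.mem_range]; omega
  have step2 : ∑ i ∈ Finset.Icc 1 d, Q.coeff i * y ^ i = Q.eval y - Q.coeff 0 := by
    rw [hIcc, Finset.sum_erase_eq_sub (by simp)]
    rw [Polynomial.eval_eq_sum_range' hQdeg]
    simp
  have hQ0 : Q.coeff 0 = ∏ j, r j := by
    rw [Polynomial.coeff_zero_eq_eval_zero, hQ, eval_prod]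
    simp
  have hQy : Q.eval y = ∏ j, (y + r j) := by
    rw [hQ, eval_prod]; simp
  -- key product bound
  have hsum : ∑ j, y / r j ≤ 1 / 2 := by
    have : ∑ j, y / r j = y * ∑ j, 1 / ‖(m : ℂ) - α j‖ := by
      rw [Finset.mul_sum]
      apply Finset.sum_congr rfl
      intro j _
      rw [hr]
      field_simp
      rfl
    rw [this]
    calc y * ∑ j, 1 / ‖(m : ℂ) - α j‖ ≤ y * (1 / w) := by
          apply mul_le_mul_of_nonneg_left hSigma (le_of_lt hy0)
      _ = 1 / 2 := by rw [hy]; field_simp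
  have hexp : Real.exp (1 / 2) < 2 := by
    nlinarith [Real.exp_one_lt_d9, Real.exp_pos (1/2 : ℝ),
      Real.exp_add (1/2 : ℝ) (1/2 : ℝ), Real.exp_one_gt_d9]
  have hkey : ∏ j, (y + r j) < 2 * ∏ j, r j := by
    have h1 : ∏ j, (y + r j) ≤ ∏ j, (r j * Real.exp (y / r j)) := by
      apply Finset.prod_le_prod
      · intro j _; positivity
      · intro j _
        have := Real.add_one_le_exp (y / r j)
        have hrj := hr0 j
        calc y + r j = r j * (y / r j + 1) := by field_simp
          _ ≤ r j * Real.exp (y / r j) := by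
              apply mul_le_mul_of_nonneg_left this (le_of_lt hrj)
    have h2 : ∏ j, (r j * Real.exp (y / r j)) = (∏ j, r j) * Real.exp (∑ j, y / r j) := by
      rw [Finset.prod_mul_distrib, Real.exp_sum]
    have h3 : Real.exp (∑ j, y / r j) < 2 := lt_of_le_of_lt (Real.exp_le_exp.mpr hsum) hexp
    have hprodpos : 0 < ∏ j, r j := Finset.prod_pos (fun j _ => hr0 j)
    calc ∏ j, (y + r j) ≤ (∏ j, r j) * Real.exp (∑ j, y / r j) := by rw [← h2]; exact h1
      _ < (∏ j, r j) * 2 := by apply mul_lt_mul_of_pos_left h3 hprodpos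
      _ = 2 * ∏ j, r j := by ring
  -- conclude
  have hlcpos : 0 < |lc| := by
    have : lc ≠ 0 := by
      intro h
      apply hfm
      have hf0 : f = 0 := Polynomial.leadingCoeff_eq_zero.mp h
      rw [hf0]; simp
    exact abs_pos.mpr this
  calc ∑ i ∈ Finset.Icc 1 d,
        |(Polynomial.derivative^[i] f).eval m| / (Nat.factorial i) * (w / 2) ^ i
      ≤ |lc| * (Q.eval y - Q.coeff 0) := by rw [← step2]; exact step1
    _ = |lc| * ((∏ j, (y + r j)) - ∏ j, r j) := by rw [hQy, hQ0]
    _ < |lc| * ∏ j, r j := by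
        apply mul_lt_mul_of_pos_left _ hlcpos
        linarith [hkey]
    _ = |f.eval m| := habs.symm
end

section
/- Let I be a compact interval and F : I → ℝ a strictly positive function. Suppose P is a finite partition of I into intervals such that every J ∈ P with #P > 1 satisfies w(J) ≥ F(c)/2 for all c ∈ J, where w(J) denotes the width of J. If F is integrable on I, then the number of intervals in P satisfies #P ≤ max{1, ∫_I 2/F(x) dx}. -/
open MeasureTheory

theorem bisection_partition_card_le (a b : ℝ) (hab : a ≤ b)
    (F : ℝ → ℝ) (hF : ∀ x ∈ Set.Icc a b, 0 < F x)
    (P : Finset (ℝ × ℝ))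
    (hP : ∀ J ∈ P, J.1 < J.2)
    (hdisj : ∀ J ∈ P, ∀ K ∈ P, J ≠ K → Set.Ioo J.1 J.2 ∩ Set.Ioo K.1 K.2 = ∅)
    (hcover : (⋃ J ∈ P, Set.Icc J.1 J.2) = Set.Icc a b)
    (hstop : 1 < P.card → ∀ J ∈ P, ∀ c ∈ Set.Icc J.1 J.2, F c / 2 ≤ J.2 - J.1)
    (hint : IntegrableOn (fun x => 2 / F x) (Set.Icc a b)) :
    (P.card : ℝ) ≤ max 1 (∫ x in Set.Icc a b, 2 / F x) := by
  rcases le_or_gt P.card 1 with hc | hc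
  · calc (P.card : ℝ) ≤ 1 := by exact_mod_cast hc
      _ ≤ _ := le_max_left _ _
  · have hsub : ∀ J ∈ P, Set.Icc J.1 J.2 ⊆ Set.Icc a b := by
      intro J hJ
      intro x hx
      rw [← hcover]
      exact Set.mem_biUnion hJ hx
    have hintJ : ∀ J ∈ P, IntegrableOn (fun x => 2 / F x) (Set.Ioo J.1 J.2) := by
      intro J hJ
      exact hint.mono_set ((Set.Ioo_subset_Icc_self).trans (hsub J hJ))
    -- each interval contributes at least 1
    have hone : ∀ J ∈ P, (1 : ℝ) ≤ ∫ x in Set.Ioo J.1 J.2, 2 / F x := by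
      intro J hJ
      have hw : 0 < J.2 - J.1 := sub_pos.mpr (hP J hJ)
      have hle : ∀ x ∈ Set.Ioo J.1 J.2, (J.2 - J.1)⁻¹ ≤ 2 / F x := by
        intro x hx
        have hx' : x ∈ Set.Icc J.1 J.2 := Set.Ioo_subset_Icc_self hx
        have hFx : 0 < F x := hF x (hsub J hJ hx')
        have h2 : F x / 2 ≤ J.2 - J.1 := hstop hc J hJ x hx'
        calc (J.2 - J.1)⁻¹ ≤ (F x / 2)⁻¹ := by
              apply inv_anti₀ (by positivity) h2
          _ = 2 / F x := by rw [inv_div]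
      have := setIntegral_mono_on (integrableOn_const measure_Ioo_lt_top.ne)
        (hintJ J hJ) measurableSet_Ioo hle
      have hconst : ∫ _ in Set.Ioo J.1 J.2, (J.2 - J.1)⁻¹ = 1 := by
        rw [setIntegral_const, Real.volume_real_Ioo_of_le (hP J hJ).le, smul_eq_mul]
        field_simp
      linarith [this, hconst.symm ▸ this]
    have hdisj' : (P : Set (ℝ × ℝ)).Pairwise
        (Function.onFun Disjoint fun J : ℝ × ℝ => Set.Ioo J.1 J.2) := by
      intro J hJ K hK hne
      exact Set.disjoint_iff_inter_eq_empty.mpr (hdisj J hJ K hK hne)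
    have hsum : ∑ J ∈ P, ∫ x in Set.Ioo J.1 J.2, 2 / F x
        = ∫ x in ⋃ J ∈ P, Set.Ioo J.1 J.2, 2 / F x :=
      (integral_biUnion_finset P (fun J _ => measurableSet_Ioo) hdisj' hintJ).symm
    have hUsub : (⋃ J ∈ P, Set.Ioo J.1 J.2) ⊆ Set.Icc a b := by
      refine Set.iUnion₂_subset fun J hJ => (Set.Ioo_subset_Icc_self).trans (hsub J hJ)
    have hmono : ∫ x in ⋃ J ∈ P, Set.Ioo J.1 J.2, 2 / F x
        ≤ ∫ x in Set.Icc a b, 2 / F x := by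
      refine setIntegral_mono_set hint ?_ (Filter.Eventually.of_forall hUsub)
      filter_upwards [ae_restrict_mem measurableSet_Icc] with x hx
      have := hF x hx
      positivity
    calc (P.card : ℝ) = ∑ _J ∈ P, (1 : ℝ) := by simp
      _ ≤ ∑ J ∈ P, ∫ x in Set.Ioo J.1 J.2, 2 / F x := Finset.sum_le_sum hone
      _ ≤ ∫ x in Set.Icc a b, 2 / F x := hsum ▸ hmono
      _ ≤ _ := le_max_right _ _
end

section
/- Let f be a polynomial over ℂ of degree d with coefficients a_0, ..., a_d. Then the Mahler measure satisfies M(f) ≤ ‖f‖_2, where ‖f‖_2 = (∑_{i=0}^d |a_i|²)^{1/2}. -/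
open Polynomial

noncomputable def S2 (p : Polynomial ℂ) (n : ℕ) : ℝ :=
  ∑ i ∈ Finset.range n, ‖p.coeff i‖ ^ 2

lemma S2_stable (p : Polynomial ℂ) {n m : ℕ} (h : p.natDegree < n) (h2 : n ≤ m) :
    S2 p m = S2 p n := by
  unfold S2
  rw [← Finset.sum_range_add_sum_Ico _ h2]
  have : ∑ i ∈ Finset.Ico n m, ‖p.coeff i‖ ^ 2 = 0 := by
    apply Finset.sum_eq_zero
    intro i hi
    rw [p.coeff_eq_zero_of_natDegree_lt (lt_of_lt_of_le h (Finset.mem_Ico.mp hi).1)]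
    simp
  rw [this, add_zero]

lemma key_ptwise (a b α : ℂ) :
    ‖a - α * b‖ ^ 2 + Complex.normSq α * Complex.normSq a + Complex.normSq b =
    ‖(starRingEnd ℂ α) * a - b‖ ^ 2 + Complex.normSq a +
      Complex.normSq α * Complex.normSq b := by
  simp only [Complex.sq_norm, Complex.normSq_apply, Complex.sub_re, Complex.sub_im,
    Complex.mul_re, Complex.mul_im, Complex.conj_re, Complex.conj_im]
  ring

lemma swap_lemma (α : ℂ) (p : Polynomial ℂ) (n : ℕ) (hn : p.natDegree + 2 ≤ n) :
    S2 ((X - C α) * p) n = S2 ((C (starRingEnd ℂ α) * X - 1) * p) n := by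
  have hc1 : ∀ i, ((X - C α) * p).coeff i = (X * p).coeff i - α * p.coeff i := by
    intro i; rw [sub_mul, coeff_sub, coeff_C_mul]
  have hc2 : ∀ i, ((C (starRingEnd ℂ α) * X - 1) * p).coeff i
      = (starRingEnd ℂ α) * (X * p).coeff i - p.coeff i := by
    intro i; rw [sub_mul, coeff_sub, mul_assoc, coeff_C_mul, one_mul]
  obtain ⟨m, rfl⟩ : ∃ m, n = m + 1 := ⟨n - 1, by omega⟩
  have hXp : ∑ i ∈ Finset.range (m + 1), Complex.normSq ((X * p).coeff i)
      = ∑ i ∈ Finset.range (m + 1), Complex.normSq (p.coeff i) := by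
    rw [Finset.sum_range_succ']
    simp only [coeff_X_mul, mul_coeff_zero, coeff_X_zero, zero_mul, map_zero, add_zero]
    have h1 : ∑ i ∈ Finset.range (m + 1), Complex.normSq (p.coeff i)
        = ∑ i ∈ Finset.range m, Complex.normSq (p.coeff i) := by
      rw [Finset.sum_range_succ, p.coeff_eq_zero_of_natDegree_lt (by omega), map_zero, add_zero]
    rw [h1]
  have hkey : ∀ i, ‖(X * p).coeff i - α * p.coeff i‖ ^ 2
        + Complex.normSq α * Complex.normSq ((X * p).coeff i) + Complex.normSq (p.coeff i)
      = ‖(starRingEnd ℂ α) * (X * p).coeff i - p.coeff i‖ ^ 2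
        + Complex.normSq ((X * p).coeff i) + Complex.normSq α * Complex.normSq (p.coeff i) :=
    fun i => key_ptwise _ _ α
  have hsum := Finset.sum_congr rfl (fun i (_ : i ∈ Finset.range (m + 1)) => hkey i)
  simp only [Finset.sum_add_distrib, ← Finset.mul_sum, hXp] at hsum
  unfold S2
  simp only [hc1, hc2]
  linarith

noncomputable def flipRoot (α : ℂ) : Polynomial ℂ :=
  if ‖α‖ ≤ 1 then X - C α else C (starRingEnd ℂ α) * X - 1

lemma flip_natDegree (α : ℂ) : (flipRoot α).natDegree = 1 := by
  unfold flipRoot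
  split
  · exact natDegree_X_sub_C α
  · have hα : (starRingEnd ℂ) α ≠ 0 := by
      intro h0
      have hz : α = 0 := by simpa using h0
      simp [hz] at *
    rw [show (C ((starRingEnd ℂ) α) * X - 1 : Polynomial ℂ)
        = C ((starRingEnd ℂ) α) * X + C (-1) by rw [map_neg, map_one]; ring]
    exact natDegree_linear hα

lemma flip_leadingCoeff_abs (α : ℂ) :
    ‖(flipRoot α).leadingCoeff‖ = max 1 ‖α‖ := by
  unfold flipRoot
  split
  · next h => rw [(monic_X_sub_C α).leadingCoeff, norm_one, max_eq_left h]
  · next h =>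
    have hα : (starRingEnd ℂ) α ≠ 0 := by
      intro h0
      have hz : α = 0 := by simpa using h0
      simp [hz] at *
    rw [show (C ((starRingEnd ℂ) α) * X - 1 : Polynomial ℂ)
        = C ((starRingEnd ℂ) α) * X + C (-1) by rw [map_neg, map_one]; ring]
    rw [leadingCoeff_linear hα, Complex.norm_conj, max_eq_right (by linarith)]

lemma flip_ne_zero (α : ℂ) : flipRoot α ≠ 0 := fun h => by
  have := flip_natDegree α; rw [h] at this; simp at this

lemma prod_flip_S2 (s : Multiset ℂ) : ∀ (p : Polynomial ℂ) (n : ℕ),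
    p.natDegree + Multiset.card s + 2 ≤ n →
    S2 ((s.map (fun α => X - C α)).prod * p) n = S2 ((s.map flipRoot).prod * p) n := by
  induction s using Multiset.induction with
  | empty => simp
  | cons α t ih =>
    intro p n hn
    rw [Multiset.map_cons, Multiset.map_cons, Multiset.prod_cons, Multiset.prod_cons,
      mul_assoc, mul_assoc]
    have hdt : ((t.map fun α => X - C α)).prod.natDegree = Multiset.card t := by
      simpa using natDegree_multiset_prod_X_sub_C_eq_card (t.map id)
    have hcard : Multiset.card (α ::ₘ t) = Multiset.card t + 1 := by simp
    have h1 : S2 ((X - C α) * ((t.map fun α => X - C α).prod * p)) n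
        = S2 (flipRoot α * ((t.map fun α => X - C α).prod * p)) n := by
      unfold flipRoot
      split
      · rfl
      · apply swap_lemma
        have := natDegree_mul_le (p := (t.map fun α => X - C α).prod) (q := p)
        omega
    rw [h1, show flipRoot α * ((t.map fun α => X - C α).prod * p)
        = (t.map fun α => X - C α).prod * (flipRoot α * p) by ring]
    rw [ih (flipRoot α * p) n (by
      have h2 := natDegree_mul_le (p := flipRoot α) (q := p)
      rw [flip_natDegree] at h2
      omega)]
    rw [show (t.map flipRoot).prod * (flipRoot α * p) = flipRoot α * ((t.map flipRoot).prod * p) by ring]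

/-- The Mahler measure of a complex polynomial. -/
noncomputable def mahlerMeasure (p : Polynomial ℂ) : ℝ :=
  ‖p.leadingCoeff‖ * ((p.roots.map (fun z => max 1 ‖z‖)).prod)

/-- Landau's inequality: the Mahler measure is bounded by the 2-norm of the coefficients. -/
theorem mahlerMeasure_le_norm2 (d : ℕ) (f : Polynomial ℂ) (hdeg : f.natDegree = d) :
    _root_.mahlerMeasure f ≤ Real.sqrt (∑ i ∈ Finset.range (d + 1), ‖f.coeff i‖ ^ 2) := by
  by_cases hf : f = 0
  · simp only [_root_.mahlerMeasure, hf, leadingCoeff_zero, norm_zero, zero_mul]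
    positivity
  have ha : f.leadingCoeff ≠ 0 := leadingCoeff_ne_zero.mpr hf
  set a := f.leadingCoeff with ha_def
  set s := f.roots with hs_def
  have hcard : Multiset.card s = d := by
    rw [hs_def, ← hdeg]
    exact splits_iff_card_roots.mp (IsAlgClosed.splits f)
  have hfact : C a * (s.map fun α => X - C α).prod = f :=
    C_leadingCoeff_mul_prod_multiset_X_sub_C (by rw [hcard, hdeg])
  set g : Polynomial ℂ := (s.map flipRoot).prod * C a with hg_def
  -- norms agree
  have hnorm : S2 f (d + 2) = S2 g (d + 2) := by
    have := prod_flip_S2 s (C a) (d + 2) (by simp [hcard])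
    rw [show (s.map fun α => X - C α).prod * C a = C a * (s.map fun α => X - C α).prod
      from mul_comm _ _, hfact] at this
    exact this
  -- degree of g
  have hprod_ne : ∀ q ∈ s.map flipRoot, q ≠ (0 : Polynomial ℂ) := by
    intro q hq
    obtain ⟨α, _, rfl⟩ := Multiset.mem_map.mp hq
    exact flip_ne_zero α
  have hdg : g.natDegree = d := by
    rw [hg_def, natDegree_mul (by
        intro h
        exact hprod_ne _ (Multiset.prod_eq_zero_iff.mp h) rfl)
      (by simpa using ha), natDegree_C, add_zero,
      natDegree_multiset_prod _ (fun h => hprod_ne 0 h rfl)]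
    rw [Multiset.map_map]
    have : (s.map (Polynomial.natDegree ∘ flipRoot)) = s.map (fun _ => 1) := by
      apply Multiset.map_congr rfl
      intro α _
      exact flip_natDegree α
    rw [this]
    simp [hcard]
  -- leading coefficient of g is the Mahler measure
  have hlead : ‖g.coeff d‖ = _root_.mahlerMeasure f := by
    rw [← hdg, coeff_natDegree, hg_def, leadingCoeff_mul, leadingCoeff_multiset_prod,
      leadingCoeff_C, norm_mul, Multiset.map_map, _root_.mahlerMeasure, mul_comm]
    congr 1
    have h1 : ‖(s.map (Polynomial.leadingCoeff ∘ flipRoot)).prod‖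
        = ((s.map (Polynomial.leadingCoeff ∘ flipRoot)).map (fun x => ‖x‖)).prod := by
      exact map_multiset_prod (normHom : ℂ →*₀ ℝ) _
    rw [h1, Multiset.map_map, ← hs_def]
    apply congrArg Multiset.prod
    apply Multiset.map_congr rfl
    intro α _
    exact flip_leadingCoeff_abs α
  -- single coefficient bounded by the sum
  have hsingle : ‖g.coeff d‖ ^ 2 ≤ S2 g (d + 1) :=
    Finset.single_le_sum (f := fun i => ‖g.coeff i‖ ^ 2)
      (fun i _ => sq_nonneg _) (Finset.self_mem_range_succ d)
  have hS2f : S2 f (d + 2) = S2 f (d + 1) := S2_stable f (by omega) (by omega)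
  have hS2g : S2 g (d + 2) = S2 g (d + 1) := S2_stable g (by omega) (by omega)
  have hfinal : ‖g.coeff d‖ ^ 2
      ≤ ∑ i ∈ Finset.range (d + 1), ‖f.coeff i‖ ^ 2 := by
    have : S2 f (d + 1) = ∑ i ∈ Finset.range (d + 1), ‖f.coeff i‖ ^ 2 := rfl
    rw [← this, ← hS2f, hnorm, hS2g]
    exact hsingle
  rw [← hlead]
  exact Real.le_sqrt_of_sq_le hfinal
end

section
/- Let α_1, ..., α_d be the roots (with multiplicity) of a degree-d polynomial g over ℂ, let x ∈ ℝ with g(x) ≠ 0, and suppose m ∈ ℝ satisfies |x - m| ≤ w/2 where w ≤ 2/(3·Σ_g(x)) and Σ_g(x) = ∑_j 1/|x - α_j|. Then g(m) ≠ 0 and Σ_g(m) ≤ 1/w, i.e., w ≤ 1/Σ_g(m). -/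
open Polynomial

theorem stopping_function_sigma (d : ℕ) (g : Polynomial ℂ) (α : Fin d → ℂ)
    (hg : g = C g.leadingCoeff * ∏ j, (X - C (α j))) (hlead : g.leadingCoeff ≠ 0)
    (x m w : ℝ) (hx : g.eval (x : ℂ) ≠ 0) (hw : 0 < w)
    (hxm : |x - m| ≤ w / 2)
    (hws : w ≤ 2 / (3 * ∑ j, 1 / ‖(x : ℂ) - α j‖)) :
    g.eval (m : ℂ) ≠ 0 ∧ (∑ j, 1 / ‖(m : ℂ) - α j‖) ≤ 1 / w := by
  set S := ∑ j, 1 / ‖(x : ℂ) - α j‖ with hS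
  have hzx : ∀ j, 0 < ‖(x : ℂ) - α j‖ := by
    intro j
    rw [norm_pos_iff]
    intro h
    apply hx
    rw [hg, eval_mul, eval_prod]
    apply mul_eq_zero_of_right
    apply Finset.prod_eq_zero (Finset.mem_univ j)
    simpa using h
  have hSnn : 0 ≤ S := Finset.sum_nonneg fun j _ => by positivity
  have hSpos : 0 < S := by
    rcases hSnn.lt_or_eq with h | h
    · exact h
    · exfalso; rw [← h] at hws; norm_num at hws; linarith
  have h1 : w * (3 * S) ≤ 2 := (le_div_iff₀ (by positivity)).mp hws
  -- each |x - α j| ≥ 3w/2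
  have hzw : ∀ j, 3 * w / 2 ≤ ‖(x : ℂ) - α j‖ := by
    intro j
    have hterm : 1 / ‖(x : ℂ) - α j‖ ≤ S :=
      Finset.single_le_sum (f := fun j => 1 / ‖(x : ℂ) - α j‖)
        (fun i _ => by positivity) (Finset.mem_univ j)
    have h2 : 1 ≤ S * ‖(x : ℂ) - α j‖ := by
      rw [div_le_iff₀ (hzx j)] at hterm; linarith
    nlinarith [hzx j]
  have hxmabs : ‖(x : ℂ) - (m : ℂ)‖ ≤ w / 2 := by
    have : ((x : ℂ) - (m : ℂ)) = ((x - m : ℝ) : ℂ) := by push_cast; ring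
    rw [this, Complex.norm_real, Real.norm_eq_abs]
    exact hxm
  have hm : ∀ j, 2 / 3 * ‖(x : ℂ) - α j‖ ≤ ‖(m : ℂ) - α j‖ := by
    intro j
    have htri : ‖(x : ℂ) - α j‖ ≤
        ‖(x : ℂ) - (m : ℂ)‖ + ‖(m : ℂ) - α j‖ := by
      have : (x : ℂ) - α j = ((x : ℂ) - (m : ℂ)) + ((m : ℂ) - α j) := by ring
      rw [this]; exact norm_add_le _ _
    have := hzw j
    linarith
  have hmpos : ∀ j, 0 < ‖(m : ℂ) - α j‖ := by
    intro j
    have := hm j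
    have := hzx j
    linarith
  constructor
  · rw [hg, eval_mul, eval_prod]
    apply mul_ne_zero (by simpa using hlead)
    rw [Finset.prod_ne_zero_iff]
    intro j _
    have := hmpos j
    intro h
    simp only [eval_sub, eval_X, eval_C] at h
    rw [h] at this
    simp at this
  · calc ∑ j, 1 / ‖(m : ℂ) - α j‖
        ≤ ∑ j, 3 / 2 * (1 / ‖(x : ℂ) - α j‖) := by
          apply Finset.sum_le_sum
          intro j _
          have h2 : 1 / ‖(m : ℂ) - α j‖
              ≤ 1 / (2 / 3 * ‖(x : ℂ) - α j‖) :=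
            one_div_le_one_div_of_le (by have := hzx j; linarith) (hm j)
          have h3 : 1 / (2 / 3 * ‖(x : ℂ) - α j‖)
              = 3 / 2 * (1 / ‖(x : ℂ) - α j‖) := by
            field_simp
          rw [h3] at h2; exact h2
      _ = 3 / 2 * S := by rw [← Finset.mul_sum]
      _ ≤ 1 / w := by rw [le_div_iff₀ hw]; nlinarith
end
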